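/- (Modal decomposition, scalar form, Proposition 1.) Under the hypotheses of the modal decomposition — J(t) real with J(t) = V(t)Λ(t)V(t)⁻¹, Λ(t) = diag(λ₁(t),…,λₙ(t)), V differentiable and invertible near t, Σ differentiable at t with Σ'(t) = J(t)Σ(t) + Σ(t)J(t)ᵀ + B(t), Σ_y = V⁻¹ Σ V⁻ᴴ, B_y = V⁻¹ B V⁻ᴴ, M = V⁻¹ V' — and assuming additionally that Σ(t) is real symmetric (so that Σ_y(t) is Hermitian), the i-th diagonal modal variance p_i(s) = (Σ_y(s))_{ii} is differentiable at t with real derivative p_i'(t) = 2·Re(λ_i(t))·p_i(t) + (B_y(t))_{ii} − 2·Re(∑_b M(t)_{ib}·(Σ_y(t))_{bi}) for each i. -/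

import Mathlib

open Matrix
open Asymptotics
attribute [local instance] Matrix.normedAddCommGroup Matrix.normedSpace

theorem hasDerivAt_matrix {m n : ℕ} {f : ℝ → Matrix (Fin m) (Fin n) ℂ}
    {f' : Matrix (Fin m) (Fin n) ℂ} {t : ℝ} :
    HasDerivAt f f' t ↔ ∀ i j, HasDerivAt (fun s => f s i j) (f' i j) t := by
  simp only [hasDerivAt_iff_isLittleO]
  refine Iff.trans hasDerivAt_iff_isLittleO ?_
  refine Iff.trans (isLittleO_pi (E' := fun _ : Fin m => Fin n → ℂ) (g' := fun x' : ℝ => x' - t)) ?_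
  refine forall_congr' fun i => ?_
  rw [isLittleO_pi (E' := fun _ : Fin n => ℂ)]
  rfl

theorem hasDerivAt_matmul {n : ℕ} {f g : ℝ → Matrix (Fin n) (Fin n) ℂ}
    {f' g' : Matrix (Fin n) (Fin n) ℂ} {t : ℝ}
    (hf : HasDerivAt f f' t) (hg : HasDerivAt g g' t) :
    HasDerivAt (fun s => f s * g s) (f' * g t + f t * g') t := by
  rw [hasDerivAt_matrix] at hf hg ⊢
  intro i j
  have hfun : (fun s => (f s * g s) i j) = fun s => ∑ k, f s i k * g s k j := by
    ext s; rw [Matrix.mul_apply]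
  rw [hfun, Matrix.add_apply, Matrix.mul_apply, Matrix.mul_apply, ← Finset.sum_add_distrib]
  exact HasDerivAt.fun_sum fun k _ => (hf i k).mul (hg k j)

theorem hasDerivAt_conjT {n : ℕ} {f : ℝ → Matrix (Fin n) (Fin n) ℂ}
    {f' : Matrix (Fin n) (Fin n) ℂ} {t : ℝ} (hf : HasDerivAt f f' t) :
    HasDerivAt (fun s => (f s)ᴴ) f'ᴴ t := by
  rw [hasDerivAt_matrix] at hf ⊢
  intro i j
  simpa only [Matrix.conjTranspose_apply] using (hf j i).star

theorem diffAt_det {n : ℕ} {f : ℝ → Matrix (Fin n) (Fin n) ℂ} {t : ℝ}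
    (hf : ∀ i j, DifferentiableAt ℝ (fun s => f s i j) t) :
    DifferentiableAt ℝ (fun s => (f s).det) t := by
  simp only [Matrix.det_apply']
  exact DifferentiableAt.fun_sum fun σ _ =>
    ((DifferentiableAt.fun_finsetProd fun k _ => hf (σ k) k).const_mul _)

theorem hasDerivAt_matinv {n : ℕ} {V : ℝ → Matrix (Fin n) (Fin n) ℂ}
    {V' : Matrix (Fin n) (Fin n) ℂ} {t : ℝ}
    (hVinv : ∀ᶠ s in nhds t, IsUnit (V s)) (hV : HasDerivAt V V' t) :
    HasDerivAt (fun s => (V s)⁻¹) (-((V t)⁻¹ * V' * (V t)⁻¹)) t := by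
  have hVt : IsUnit (V t) := hVinv.self_of_nhds
  have hdet : IsUnit (V t).det := (Matrix.isUnit_iff_isUnit_det _).mp hVt
  have hdet0 : (V t).det ≠ 0 := hdet.ne_zero
  have hVij : ∀ i j, HasDerivAt (fun s => V s i j) (V' i j) t := hasDerivAt_matrix.mp hV
  have hdetV : DifferentiableAt ℝ (fun s => (V s).det) t :=
    diffAt_det fun i j => (hVij i j).differentiableAt
  have hW : DifferentiableAt ℝ (fun s => (V s)⁻¹) t := by
    refine (differentiableAt_pi (𝕜 := ℝ) (F' := fun _ : Fin n => Fin n → ℂ) (Φ := fun s => ((V s)⁻¹ : Matrix (Fin n) (Fin n) ℂ))).mpr fun i => ?_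
    rw [differentiableAt_pi]; intro j
    have heq : (fun s => (V s)⁻¹ i j) = fun s => ((V s).det)⁻¹ * (V s).adjugate i j := by
      ext s
      simp [Matrix.inv_def, Ring.inverse_eq_inv, smul_eq_mul]
    rw [heq]
    refine DifferentiableAt.mul ?_ ?_
    · exact (differentiableAt_inv (𝕜 := ℝ) hdet0).comp t hdetV
    · simp only [Matrix.adjugate_apply]
      refine diffAt_det fun a b => ?_
      by_cases h : a = j
      · simpa [Matrix.updateRow_apply, h] using differentiableAt_const (Pi.single i (1:ℂ) b)
      · simpa [Matrix.updateRow_apply, h] using (hVij a b).differentiableAt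
  have hWD := hW.hasDerivAt
  set D := deriv (fun s => (V s)⁻¹) t with hD
  have h1 : HasDerivAt (fun s => (V s)⁻¹ * V s) (D * V t + (V t)⁻¹ * V') t :=
    hasDerivAt_matmul hWD hV
  have h2 : HasDerivAt (fun _ : ℝ => (1 : Matrix (Fin n) (Fin n) ℂ)) (D * V t + (V t)⁻¹ * V') t := by
    refine h1.congr_of_eventuallyEq ?_
    filter_upwards [hVinv] with s hs
    exact (Matrix.nonsing_inv_mul _ ((Matrix.isUnit_iff_isUnit_det _).mp hs)).symm
  have h3 : D * V t + (V t)⁻¹ * V' = 0 := h2.unique (hasDerivAt_const t 1)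
  have h4 : D = -((V t)⁻¹ * V' * (V t)⁻¹) := by
    have h5 : D * V t = -((V t)⁻¹ * V') := by
      rw [eq_neg_iff_add_eq_zero]; exact h3
    calc D = D * (V t * (V t)⁻¹) := by rw [Matrix.mul_nonsing_inv _ hdet, mul_one]
    _ = (D * V t) * (V t)⁻¹ := by rw [Matrix.mul_assoc]
    _ = -((V t)⁻¹ * V' * (V t)⁻¹) := by rw [h5]; simp [Matrix.neg_mul]
  rw [← h4]
  exact hWD

theorem stmt_11 {n : ℕ} (hn : 1 ≤ n)
    (J B Sg V L : ℝ → Matrix (Fin n) (Fin n) ℂ)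
    (V' : Matrix (Fin n) (Fin n) ℂ) (t : ℝ)
    (hJreal : ∀ i j, (J t i j).im = 0)
    (hdecomp : J t = V t * L t * (V t)⁻¹)
    (hLdiag : (L t).IsDiag)
    (hVinv : ∀ᶠ s in nhds t, IsUnit (V s))
    (hV : HasDerivAt V V' t)
    (hSg : HasDerivAt Sg (J t * Sg t + Sg t * (J t)ᵀ + B t) t)
    (hSgreal : ∀ i j, (Sg t i j).im = 0)
    (hSgsym : (Sg t)ᵀ = Sg t)
    (i : Fin n) :
    HasDerivAt (fun s => ((V s)⁻¹ * Sg s * ((V s)⁻¹)ᴴ) i i)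
      (2 * (((L t i i).re : ℂ)) * ((V t)⁻¹ * Sg t * ((V t)⁻¹)ᴴ) i i
        + ((V t)⁻¹ * B t * ((V t)⁻¹)ᴴ) i i
        - 2 * (((∑ b, ((V t)⁻¹ * V') i b * ((V t)⁻¹ * Sg t * ((V t)⁻¹)ᴴ) b i).re : ℂ))) t := by
  have hVt : IsUnit (V t) := hVinv.self_of_nhds
  have hdet : IsUnit (V t).det := (Matrix.isUnit_iff_isUnit_det _).mp hVt
  set W : Matrix (Fin n) (Fin n) ℂ := (V t)⁻¹ with hWdef
  have hWV : W * V t = 1 := Matrix.nonsing_inv_mul _ hdet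
  have hVW : V t * W = 1 := Matrix.mul_nonsing_inv _ hdet
  -- structural facts
  have hJH : (J t)ᴴ = (J t)ᵀ := by
    ext a b
    simp only [Matrix.conjTranspose_apply, Matrix.transpose_apply]
    apply Complex.ext <;> simp [Complex.star_def, hJreal b a]
  have hSH : (Sg t)ᴴ = Sg t := by
    ext a b
    have h1 : star (Sg t b a) = Sg t b a := by
      apply Complex.ext <;> simp [Complex.star_def, hSgreal b a]
    rw [Matrix.conjTranspose_apply, h1, ← Matrix.transpose_apply (Sg t) a b, hSgsym]
  have hWJ : W * J t = L t * W := by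
    rw [hdecomp, ← Matrix.mul_assoc, ← Matrix.mul_assoc, hWV, Matrix.one_mul]
  have hJTW : (J t)ᵀ * Wᴴ = Wᴴ * (L t)ᴴ := by
    have h := congrArg Matrix.conjTranspose hWJ
    rw [Matrix.conjTranspose_mul, Matrix.conjTranspose_mul, hJH] at h
    exact h
  have hYH : (W * Sg t * Wᴴ)ᴴ = W * Sg t * Wᴴ := by
    simp [Matrix.conjTranspose_mul, Matrix.mul_assoc, hSH]
  -- derivative at matrix level
  have hWd : HasDerivAt (fun s => (V s)⁻¹) (-(W * V' * W)) t := by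
    simpa [hWdef] using hasDerivAt_matinv hVinv hV
  have h2 : HasDerivAt (fun s => (V s)⁻¹ * Sg s)
      (-(W * V' * W) * Sg t + W * (J t * Sg t + Sg t * (J t)ᵀ + B t)) t :=
    hasDerivAt_matmul hWd hSg
  have h3 : HasDerivAt (fun s => ((V s)⁻¹)ᴴ) (-(W * V' * W))ᴴ t := hasDerivAt_conjT hWd
  have h4 : HasDerivAt (fun s => (V s)⁻¹ * Sg s * ((V s)⁻¹)ᴴ)
      ((-(W * V' * W) * Sg t + W * (J t * Sg t + Sg t * (J t)ᵀ + B t)) * Wᴴ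
        + (W * Sg t) * (-(W * V' * W))ᴴ) t := hasDerivAt_matmul h2 h3
  -- simplify the matrix derivative
  have hWJ' : ∀ X : Matrix (Fin n) (Fin n) ℂ, W * (J t * X) = L t * (W * X) := fun X => by
    rw [← Matrix.mul_assoc, hWJ, Matrix.mul_assoc]
  have hE : (-(W * V' * W) * Sg t + W * (J t * Sg t + Sg t * (J t)ᵀ + B t)) * Wᴴ
        + (W * Sg t) * (-(W * V' * W))ᴴ
      = L t * (W * Sg t * Wᴴ) + (W * Sg t * Wᴴ) * (L t)ᴴ + W * B t * Wᴴ
        - (W * V') * (W * Sg t * Wᴴ) - (W * Sg t * Wᴴ) * (W * V')ᴴ := by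
    simp only [Matrix.conjTranspose_neg, Matrix.conjTranspose_mul, Matrix.neg_mul,
      Matrix.mul_neg, Matrix.add_mul, Matrix.mul_add, Matrix.mul_assoc, sub_eq_add_neg]
    rw [hWJ' (Sg t * Wᴴ), hJTW]
    abel
  rw [hE] at h4
  have h5 := (hasDerivAt_matrix.mp h4) i i
  -- entry computation
  have p1 : (L t * (W * Sg t * Wᴴ)) i i = L t i i * (W * Sg t * Wᴴ) i i := by
    rw [Matrix.mul_apply]
    refine Finset.sum_eq_single i (fun k _ hk => by rw [hLdiag (Ne.symm hk), zero_mul])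
      (fun h => absurd (Finset.mem_univ i) h)
  have p2 : ((W * Sg t * Wᴴ) * (L t)ᴴ) i i = (W * Sg t * Wᴴ) i i * star (L t i i) := by
    rw [Matrix.mul_apply]
    refine Finset.sum_eq_single i (fun k _ hk => ?_) (fun h => absurd (Finset.mem_univ i) h)
    rw [Matrix.conjTranspose_apply, hLdiag (Ne.symm hk), star_zero, mul_zero]
  have p5 : ((W * Sg t * Wᴴ) * (W * V')ᴴ) i i
      = star (∑ b, (W * V') i b * (W * Sg t * Wᴴ) b i) := by
    rw [Matrix.mul_apply, star_sum]
    refine Finset.sum_congr rfl fun b _ => ?_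
    rw [StarMul.star_mul, Matrix.conjTranspose_apply]
    congr 1
    rw [← Matrix.conjTranspose_apply, hYH]
  have key : 2 * (((L t i i).re : ℂ)) * (W * Sg t * Wᴴ) i i
        + (W * B t * Wᴴ) i i
        - 2 * (((∑ b, (W * V') i b * (W * Sg t * Wᴴ) b i).re : ℂ))
      = (L t * (W * Sg t * Wᴴ) + (W * Sg t * Wᴴ) * (L t)ᴴ + W * B t * Wᴴ
        - (W * V') * (W * Sg t * Wᴴ) - (W * Sg t * Wᴴ) * (W * V')ᴴ) i i := by
    simp only [Matrix.sub_apply, Matrix.add_apply, p1, p2, p5, ← Matrix.mul_apply]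
    set y := (W * Sg t * Wᴴ) i i
    set z := ((W * V') * (W * Sg t * Wᴴ)) i i with hz
    have hz' : ((W * V') * (W * Sg t * Wᴴ)) i i = ∑ b, (W * V') i b * (W * Sg t * Wᴴ) b i :=
      Matrix.mul_apply
    have hl : L t i i + star (L t i i) = 2 * (((L t i i).re : ℂ)) := by
      rw [Complex.star_def, Complex.add_conj]; push_cast; ring
    have hzz : z + star z = 2 * ((z.re : ℂ)) := by
      rw [Complex.star_def, Complex.add_conj]; push_cast; ring
    linear_combination (-y) * hl + hzz
  rw [key]
  exact h5
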